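/- A nondecreasing sequence (q_n)_{n≥1} of positive integers is the sequence of denominators of convergents of some irrational number α if and only if, setting q_0 = 1, it satisfies q_{n+2} ≡ q_n (mod q_{n+1}) for all n ≥ 0 (together with q_1 ≥ 1 and strict growth q_{n+2} > q_{n+1} for n ≥ 0). -/

import Mathlib

open Filter Topology

namespace DenomChar

/-- finite truncation `[a n; a (n+1), …, a (n+k)]` of the tail continued fraction. -/
noncomputable def t (a : ℕ → ℕ) : ℕ → ℕ → ℝ
  | 0, n => a n
  | k + 1, n => a n + (t a k (n + 1))⁻¹

variable {a : ℕ → ℕ} (ha : ∀ n, 1 ≤ a n)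
include ha

lemma t_lower : ∀ k n, (a n : ℝ) ≤ t a k n := by
  intro k
  induction k with
  | zero => intro n; simp [t]
  | succ k ih =>
    intro n
    have h1 : (1 : ℝ) ≤ t a k (n + 1) :=
      le_trans (by exact_mod_cast ha (n + 1)) (ih (n + 1))
    have : (0 : ℝ) ≤ (t a k (n + 1))⁻¹ := inv_nonneg.mpr (by linarith)
    simp only [t]; linarith

lemma t_one_le (k n : ℕ) : (1 : ℝ) ≤ t a k n :=
  le_trans (by exact_mod_cast ha n) (t_lower ha k n)

lemma t_upper : ∀ k n, t a k n ≤ (a n : ℝ) + 1 := by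
  intro k
  cases k with
  | zero => intro n; simp [t]
  | succ k =>
    intro n
    have h1 : (1 : ℝ) ≤ t a k (n + 1) := t_one_le ha k (n + 1)
    have : (t a k (n + 1))⁻¹ ≤ 1 := by
      rw [inv_le_one_iff₀]; right; linarith
    simp only [t]; linarith

lemma t_pos (k n : ℕ) : (0 : ℝ) < t a k n := lt_of_lt_of_le one_pos (t_one_le ha k n)

lemma t_diff_le_one (k n : ℕ) : |t a (k + 1) n - t a k n| ≤ 1 := by
  have h1 := t_lower ha (k + 1) n
  have h2 := t_lower ha k n
  have h3 := t_upper ha (k + 1) n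
  have h4 := t_upper ha k n
  rw [abs_le]; constructor <;> linarith

lemma t_contract (k n : ℕ) :
    |t a (k + 3) n - t a (k + 2) n| ≤ (1 / 4) * |t a (k + 1) (n + 2) - t a k (n + 2)| := by
  set A := t a (k + 2) (n + 1) with hA
  set B := t a (k + 1) (n + 1) with hB
  set C := t a (k + 1) (n + 2) with hC
  set E := t a k (n + 2) with hE
  have hApos : (0 : ℝ) < A := t_pos ha _ _
  have hBpos : (0 : ℝ) < B := t_pos ha _ _
  have hCpos : (0 : ℝ) < C := t_pos ha _ _
  have hEpos : (0 : ℝ) < E := t_pos ha _ _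
  have hAeq : A = (a (n + 1) : ℝ) + C⁻¹ := rfl
  have hBeq : B = (a (n + 1) : ℝ) + E⁻¹ := rfl
  have ha1 : (1 : ℝ) ≤ (a (n + 1) : ℝ) := by exact_mod_cast ha (n + 1)
  have hC1 : (1 : ℝ) ≤ C := t_one_le ha _ _
  have hE1 : (1 : ℝ) ≤ E := t_one_le ha _ _
  have hAC : (2 : ℝ) ≤ A * C := by
    have : A * C = (a (n + 1) : ℝ) * C + 1 := by
      rw [hAeq]; field_simp
    rw [this]; nlinarith
  have hBE : (2 : ℝ) ≤ B * E := by
    have : B * E = (a (n + 1) : ℝ) * E + 1 := by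
      rw [hBeq]; field_simp
    rw [this]; nlinarith
  have key : t a (k + 3) n - t a (k + 2) n = (C - E) / (A * B * C * E) := by
    have h1 : t a (k + 3) n = (a n : ℝ) + A⁻¹ := rfl
    have h2 : t a (k + 2) n = (a n : ℝ) + B⁻¹ := rfl
    rw [h1, h2, hAeq, hBeq]
    field_simp
    ring
  rw [key, abs_div]
  have hD : (4 : ℝ) ≤ A * B * C * E := by nlinarith
  have hDpos : (0 : ℝ) < A * B * C * E := by positivity
  rw [abs_of_pos hDpos]
  rw [div_le_iff₀ hDpos]
  have habs : (0 : ℝ) ≤ |C - E| := abs_nonneg _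
  calc |C - E| = (1/4) * |C - E| * 4 := by ring
    _ ≤ 1 / 4 * |C - E| * (A * B * C * E) := by
        apply mul_le_mul_of_nonneg_left hD; positivity

lemma t_diff_le (k n : ℕ) : |t a (k + 1) n - t a k n| ≤ 2 * (1 / 2 : ℝ) ^ k := by
  induction k using Nat.strong_induction_on generalizing n with
  | _ k ih =>
    match k with
    | 0 => simpa using le_trans (t_diff_le_one ha 0 n) (by norm_num)
    | 1 =>
      refine le_trans (t_diff_le_one ha 1 n) ?_; norm_num
    | (k + 2) =>
      calc |t a (k + 3) n - t a (k + 2) n|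
          ≤ (1 / 4) * |t a (k + 1) (n + 2) - t a k (n + 2)| := t_contract ha k n
        _ ≤ (1 / 4) * (2 * (1 / 2 : ℝ) ^ k) := by
            have := ih k (by omega) (n := n + 2)
            linarith
        _ = 2 * (1 / 2 : ℝ) ^ (k + 2) := by ring

lemma t_cauchy (n : ℕ) : CauchySeq (fun k => t a k n) := by
  apply cauchySeq_of_le_geometric (1 / 2 : ℝ) 2 (by norm_num)
  intro k
  rw [Real.dist_eq, abs_sub_comm]
  exact t_diff_le ha k n

end DenomChar

namespace DenomChar

variable {a : ℕ → ℕ} (ha : ∀ n, 1 ≤ a n)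

/-- the tail value `[a n; a (n+1), …]` of the infinite continued fraction. -/
noncomputable def x (a : ℕ → ℕ) (n : ℕ) : ℝ := limUnder atTop (fun k => t a k n)

include ha

lemma x_tendsto (n : ℕ) : Tendsto (fun k => t a k n) atTop (𝓝 (x a n)) :=
  (t_cauchy ha n).tendsto_limUnder

lemma x_lower (n : ℕ) : (a n : ℝ) ≤ x a n :=
  ge_of_tendsto' (x_tendsto ha n) (fun k => t_lower ha k n)

lemma x_upper (n : ℕ) : x a n ≤ (a n : ℝ) + 1 :=
  le_of_tendsto' (x_tendsto ha n) (fun k => t_upper ha k n)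

lemma x_one_le (n : ℕ) : (1 : ℝ) ≤ x a n :=
  le_trans (by exact_mod_cast ha n) (x_lower ha n)

lemma x_pos (n : ℕ) : (0 : ℝ) < x a n := lt_of_lt_of_le one_pos (x_one_le ha n)

lemma x_rec (n : ℕ) : x a n = (a n : ℝ) + (x a (n + 1))⁻¹ := by
  have h1 : Tendsto (fun k => t a (k + 1) n) atTop (𝓝 (x a n)) :=
    (x_tendsto ha n).comp (tendsto_add_atTop_nat 1)
  have h2 : Tendsto (fun k => (a n : ℝ) + (t a k (n + 1))⁻¹) atTop
      (𝓝 ((a n : ℝ) + (x a (n + 1))⁻¹)) := by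
    apply Tendsto.const_add
    exact ((x_tendsto ha (n + 1)).inv₀ (ne_of_gt (x_pos ha (n + 1))))
  have heq : (fun k => t a (k + 1) n) = fun k => (a n : ℝ) + (t a k (n + 1))⁻¹ := rfl
  rw [heq] at h1
  exact tendsto_nhds_unique h1 h2

lemma x_gt (n : ℕ) : (a n : ℝ) < x a n := by
  have := x_rec ha n
  have hpos : (0 : ℝ) < (x a (n + 1))⁻¹ := inv_pos.mpr (x_pos ha (n + 1))
  linarith

lemma x_gt_one (n : ℕ) : (1 : ℝ) < x a n :=
  lt_of_le_of_lt (by exact_mod_cast ha n) (x_gt ha n)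

lemma x_lt (n : ℕ) : x a n < (a n : ℝ) + 1 := by
  have := x_rec ha n
  have h1 : (x a (n + 1))⁻¹ < 1 := by
    rw [inv_lt_one_iff₀]; right; exact x_gt_one ha (n + 1)
  linarith

lemma x_floor (n : ℕ) : ⌊x a n⌋ = (a n : ℤ) := by
  rw [Int.floor_eq_iff]
  constructor
  · exact_mod_cast x_lower ha n
  · push_cast; exact x_lt ha n

lemma x_fract (n : ℕ) : Int.fract (x a n) = (x a (n + 1))⁻¹ := by
  rw [← Int.self_sub_floor, x_floor ha n]
  have := x_rec ha n
  push_cast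
  linarith

lemma x_irrational (n : ℕ) : Irrational (x a n) := by
  rintro ⟨r, hr⟩
  -- denominator descent
  have key : ∀ d : ℕ, ∀ q : ℚ, q.den = d → ∀ n, x a n ≠ (q : ℝ) := by
    intro d
    induction d using Nat.strong_induction_on with
    | _ d ih =>
      intro q hq n hxq
      -- `a n < q < a n + 1` as rationals
      have h1 : ((a n : ℚ) : ℝ) < (q : ℝ) := by rw [← hxq]; push_cast; exact x_gt ha n
      have h2 : (q : ℝ) < ((a n : ℚ) : ℝ) + 1 := by rw [← hxq]; push_cast; exact x_lt ha n
      have hq1 : (a n : ℚ) < q := by exact_mod_cast h1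
      have hq2 : q < (a n : ℚ) + 1 := by exact_mod_cast h2
      set s : ℚ := q - (a n : ℚ) with hs
      have hs0 : 0 < s := by simp [hs]; linarith
      have hs1 : s < 1 := by simp [hs]; linarith
      -- `x a (n+1)` equals `s⁻¹`
      have hxn1 : x a (n + 1) = ((s⁻¹ : ℚ) : ℝ) := by
        have hfr : Int.fract (x a n) = (x a (n + 1))⁻¹ := x_fract ha n
        have hx1pos := x_pos ha (n + 1)
        have : (x a (n + 1))⁻¹ = (s : ℝ) := by
          rw [← hfr, ← Int.self_sub_floor, x_floor ha n, hxq]; push_cast [hs]; ring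
        rw [Rat.cast_inv, ← this, inv_inv]
      -- denominator strictly decreases
      have hsden : s.den ∣ q.den := by
        have h := Rat.add_den_dvd q (-(a n : ℚ))
        simpa [hs, sub_eq_add_neg, Rat.den_neg_eq_den, Rat.den_intCast] using h
      have hsle : s.den ≤ q.den := Nat.le_of_dvd q.pos hsden
      have hnum_pos : 0 < s.num := Rat.num_pos.mpr hs0
      have hnum_lt : s.num < (s.den : ℤ) := by
        have h := hs1
        rw [← Rat.num_div_den s, div_lt_one (by exact_mod_cast s.pos)] at h
        exact_mod_cast h
      have hdvd : ((s⁻¹).den : ℤ) ∣ s.num := by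
        rw [Rat.inv_def]; exact Rat.den_dvd _ _
      have hle : ((s⁻¹).den : ℤ) ≤ s.num := Int.le_of_dvd hnum_pos hdvd
      have hlt : (s⁻¹).den < d := by
        rw [← hq]; omega
      exact ih _ hlt s⁻¹ rfl (n + 1) hxn1
  exact key r.den r rfl n hr.symm

end DenomChar

namespace DenomChar

variable {a : ℕ → ℕ} (ha : ∀ n, 1 ≤ a n)
include ha

lemma x_fract_ne (n : ℕ) : Int.fract (x a n) ≠ 0 := by
  rw [x_fract ha n]
  exact ne_of_gt (inv_pos.mpr (x_pos ha (n + 1)))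

lemma of_s_x : ∀ n m, (GenContFract.of (x a m)).s.get? n = some ⟨1, ((a (m + n + 1) : ℕ) : ℝ)⟩ := by
  intro n
  induction n with
  | zero =>
    intro m
    have hfr : Int.fract (x a m) = (x a (m + 1))⁻¹ := x_fract ha m
    have h := GenContFract.of_s_head (x_fract_ne ha m)
    rw [show (GenContFract.of (x a m)).s.get? 0 = (GenContFract.of (x a m)).s.head from rfl,
      h, hfr, inv_inv, x_floor ha (m + 1)]
    norm_num
  | succ n ih =>
    intro m
    rw [GenContFract.of_s_succ, x_fract ha m, inv_inv, ih (m + 1),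
      show m + 1 + n + 1 = m + (n + 1) + 1 from by omega]

end DenomChar

open DenomChar

/-- Fact 4.13: a nondecreasing sequence of positive integers (with `q 0 = 1`)
is the sequence of denominators of convergents of some irrational number iff it
satisfies `q (n+2) ≡ q n (mod q (n+1))` with strict growth `q (n+2) > q (n+1)`. -/
theorem denominators_characterization (q : ℕ → ℕ) (h0 : q 0 = 1) :
    (Monotone q ∧ 1 ≤ q 1 ∧ (∀ n, q (n + 1) < q (n + 2)) ∧
      ∀ n, q (n + 2) ≡ q n [MOD q (n + 1)]) ↔
    ∃ α : ℝ, Irrational α ∧ ∀ n, (GenContFract.of α).dens n = (q n : ℝ) := by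
  constructor
  · rintro ⟨hmono, hq1, hgrow, hmod⟩
    -- define the partial quotients
    set a : ℕ → ℕ := fun n => match n with
      | 0 => q 1
      | Nat.succ n => (q (n + 2) - q n) / q (n + 1) with ha_def
    have ha0 : a 0 = q 1 := rfl
    have haS : ∀ n, a (n + 1) = (q (n + 2) - q n) / q (n + 1) := fun n => rfl
    have hposq : ∀ n, 1 ≤ q n := by
      intro n
      cases n with
      | zero => omega
      | succ n => exact le_trans hq1 (hmono (by omega))
    have hdvd : ∀ n, q (n + 1) ∣ q (n + 2) - q n := fun n =>
      (Nat.modEq_iff_dvd' (hmono (by omega))).mp (hmod n).symm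
    have hrec : ∀ n, q (n + 2) = a (n + 1) * q (n + 1) + q n := by
      intro n
      have h1 : a (n + 1) * q (n + 1) = q (n + 2) - q n := by
        rw [haS]; exact Nat.div_mul_cancel (hdvd n)
      have h2 : q n ≤ q (n + 2) := hmono (by omega)
      omega
    have ha : ∀ n, 1 ≤ a n := by
      intro n
      cases n with
      | zero => exact hq1
      | succ n =>
        by_contra h
        have hz : a (n + 1) = 0 := by omega
        have := hrec n
        rw [hz] at this
        have h2 := hgrow n
        have h3 := hmono (show n ≤ n + 1 by omega)
        omega
    refine ⟨(x a 0)⁻¹, (x_irrational ha 0).inv, ?_⟩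
    have hx0 : (1 : ℝ) < x a 0 := x_gt_one ha 0
    have hαpos : (0 : ℝ) < (x a 0)⁻¹ := inv_pos.mpr (by linarith)
    have hαlt : (x a 0)⁻¹ < 1 := by
      rw [inv_lt_one_iff₀]; right; exact hx0
    have hfractα : Int.fract ((x a 0)⁻¹) = (x a 0)⁻¹ :=
      Int.fract_eq_self.mpr ⟨le_of_lt hαpos, hαlt⟩
    have hsα : ∀ n, (GenContFract.of ((x a 0)⁻¹)).s.get? n = some ⟨1, ((a n : ℕ) : ℝ)⟩ := by
      intro n
      cases n with
      | zero =>
        have hne : Int.fract ((x a 0)⁻¹) ≠ 0 := by rw [hfractα]; exact ne_of_gt hαpos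
        rw [show (GenContFract.of ((x a 0)⁻¹)).s.get? 0
            = (GenContFract.of ((x a 0)⁻¹)).s.head from rfl,
          GenContFract.of_s_head hne, hfractα, inv_inv, x_floor ha 0]
        norm_num
      | succ n =>
        rw [GenContFract.of_s_succ, hfractα, inv_inv, of_s_x ha n 0,
          show 0 + n + 1 = n + 1 from by omega]
    have hdens : ∀ n, (GenContFract.of ((x a 0)⁻¹)).dens n = (q n : ℝ) ∧
        (GenContFract.of ((x a 0)⁻¹)).dens (n + 1) = (q (n + 1) : ℝ) := by
      intro n
      induction n with
      | zero =>
        constructor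
        · rw [GenContFract.zeroth_den_eq_one, h0]; norm_num
        · rw [GenContFract.first_den_eq (hsα 0), ha0]
      | succ n ih =>
        refine ⟨ih.2, ?_⟩
        have hr := GenContFract.dens_recurrence (hsα (n + 1)) ih.1 ih.2
        rw [hr]
        have h := hrec n
        simp only
        rw [show q (n + 1 + 1) = a (n + 1) * q (n + 1) + q n from h]
        push_cast
        ring
    exact fun n => (hdens n).1
  · rintro ⟨α, hirr, hden⟩
    have hnt : ∀ n, ¬(GenContFract.of α).TerminatedAt n := by
      intro n hterm
      have hterm' : (GenContFract.of α).Terminates := ⟨n, hterm⟩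
      rw [GenContFract.terminates_iff_rat] at hterm'
      obtain ⟨r, hr⟩ := hterm'
      exact hirr ⟨r, hr.symm⟩
    have hgp : ∀ n, ∃ m : ℕ, 1 ≤ m ∧
        (GenContFract.of α).s.get? n = some ⟨1, ((m : ℕ) : ℝ)⟩ := by
      intro n
      cases hs : (GenContFract.of α).s.get? n with
      | none => exact absurd (GenContFract.terminatedAt_iff_s_none.mpr hs) (hnt n)
      | some gp =>
        obtain ⟨ha1, z, hz⟩ := GenContFract.of_partNum_eq_one_and_exists_int_partDen_eq hs
        have hb := GenContFract.of_one_le_get?_partDen (GenContFract.partDen_eq_s_b hs)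
        have hz1 : (1 : ℤ) ≤ z := by
          have : (1 : ℝ) ≤ (z : ℝ) := hz ▸ hb
          exact_mod_cast this
        refine ⟨z.toNat, by omega, ?_⟩
        have hzz : ((z.toNat : ℕ) : ℝ) = (z : ℝ) := by
          exact_mod_cast congrArg (fun t : ℤ => (t : ℝ))
            (Int.toNat_of_nonneg (show (0 : ℤ) ≤ z by omega))
        cases gp with
        | mk A B =>
          simp only at ha1 hz
          rw [ha1, hz, ← hzz]
    have hq1 : 1 ≤ q 1 := by
      obtain ⟨m, hm1, hs0⟩ := hgp 0
      have h1 := GenContFract.first_den_eq hs0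
      rw [hden 1] at h1
      have h1' : (q 1 : ℝ) = (m : ℝ) := h1
      have : q 1 = m := by exact_mod_cast h1'
      omega
    have hkey : ∀ n, ∃ m, 1 ≤ m ∧ q (n + 2) = m * q (n + 1) + q n := by
      intro n
      obtain ⟨m, hm1, hs⟩ := hgp (n + 1)
      have hr := GenContFract.dens_recurrence hs (hden n) (hden (n + 1))
      rw [hden (n + 2)] at hr
      refine ⟨m, hm1, ?_⟩
      have : (q (n + 2) : ℝ) = ((m * q (n + 1) + q n : ℕ) : ℝ) := by
        rw [hr]; push_cast; ring
      exact_mod_cast this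
    have hposq : ∀ n, 1 ≤ q n ∧ 1 ≤ q (n + 1) := by
      intro n
      induction n with
      | zero => exact ⟨by omega, hq1⟩
      | succ n ih =>
        obtain ⟨m, hm, hr⟩ := hkey n
        refine ⟨ih.2, ?_⟩
        calc 1 ≤ q n := ih.1
          _ ≤ m * q (n + 1) + q n := Nat.le_add_left _ _
          _ = q (n + 2) := hr.symm
    refine ⟨monotone_nat_of_le_succ ?_, hq1, ?_, ?_⟩
    · intro n
      cases n with
      | zero => rw [h0]; exact hq1
      | succ n =>
        obtain ⟨m, hm, hr⟩ := hkey n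
        calc q (n + 1) ≤ m * q (n + 1) := Nat.le_mul_of_pos_left _ (by omega)
          _ ≤ m * q (n + 1) + q n := Nat.le_add_right _ _
          _ = q (n + 2) := hr.symm
    · intro n
      obtain ⟨m, hm, hr⟩ := hkey n
      have h1 := (hposq n).1
      calc q (n + 1) < q (n + 1) + q n := by omega
        _ ≤ m * q (n + 1) + q n := by
            have : q (n + 1) ≤ m * q (n + 1) := Nat.le_mul_of_pos_left _ (by omega)
            omega
        _ = q (n + 2) := hr.symm
    · intro n
      obtain ⟨m, hm, hr⟩ := hkey n
      have hle : q n ≤ q (n + 2) := by omega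
      refine ((Nat.modEq_iff_dvd' hle).mpr ⟨m, ?_⟩).symm
      rw [hr, Nat.add_sub_cancel, Nat.mul_comm]
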